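/- Let f̃(x) = Σ_{k=0}^∞ c̃_k x^{2k+1} be absolutely convergent for all real x, let β ≠ 0 and x ≥ 0. Then ∫_0^x φ(βt) f̃(t) dt = (1/√(2π)) Σ_{k=0}^∞ ((2k)!! c̃_k / β^{2k+2}) · P(k+1, β²x²/2). -/

import Mathlib

open Real MeasureTheory

/-- Standard normal density. -/
noncomputable def stdPdf (t : ℝ) : ℝ := Real.exp (-t ^ 2 / 2) / Real.sqrt (2 * Real.pi)

/-- Lower regularized incomplete gamma function P(a,x) = γ(a,x)/Γ(a). -/
noncomputable def regGammaP (a x : ℝ) : ℝ :=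
  (∫ t in (0:ℝ)..x, t ^ (a - 1) * Real.exp (-t)) / Real.Gamma a

/-- (2k)!! = 2^k k! -/
noncomputable def evenDF (k : ℕ) : ℝ := 2 ^ k * k.factorial

lemma subst_lemma (k : ℕ) (β x : ℝ) (hβ : β ≠ 0) :
    ∫ t in (0:ℝ)..x, Real.exp (-(β ^ 2 * t ^ 2) / 2) * t ^ (2 * k + 1) =
      (2 ^ k / β ^ (2 * k + 2)) * ∫ u in (0:ℝ)..(β ^ 2 * x ^ 2 / 2), u ^ k * Real.exp (-u) := by
  have hβ2 : (β:ℝ) ^ 2 ≠ 0 := pow_ne_zero _ hβ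
  have key := intervalIntegral.integral_comp_smul_deriv (a := (0:ℝ)) (b := x)
    (f := fun t => β ^ 2 * t ^ 2 / 2) (f' := fun t => β ^ 2 * t)
    (g := fun u => (2 * u / β ^ 2) ^ k * Real.exp (-u) / β ^ 2)
    (fun t _ => by
      have h := (((hasDerivAt_pow 2 t).const_mul (β ^ 2)).div_const 2)
      convert h using 1
      · rfl
      · rfl
      ring)
    (by fun_prop)
    (by fun_prop)
  simp only [smul_eq_mul] at key
  have hfun : ∀ t : ℝ, β ^ 2 * t * ((2 * (β ^ 2 * t ^ 2 / 2) / β ^ 2) ^ k * Real.exp (-(β ^ 2 * t ^ 2 / 2)) / β ^ 2)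
      = Real.exp (-(β ^ 2 * t ^ 2) / 2) * t ^ (2 * k + 1) := by
    intro t
    have h1 : 2 * (β ^ 2 * t ^ 2 / 2) / β ^ 2 = t ^ 2 := by field_simp
    rw [h1]
    rw [← pow_mul]
    field_simp
    ring_nf
  have hzero : β ^ 2 * (0:ℝ) ^ 2 / 2 = 0 := by ring
  rw [hzero] at key
  have lhs_eq : (∫ t in (0:ℝ)..x, Real.exp (-(β ^ 2 * t ^ 2) / 2) * t ^ (2 * k + 1))
      = ∫ u in (0:ℝ)..(β ^ 2 * x ^ 2 / 2), (2 * u / β ^ 2) ^ k * Real.exp (-u) / β ^ 2 := by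
    rw [← key]
    exact intervalIntegral.integral_congr fun t _ => (hfun t).symm
  rw [lhs_eq]
  rw [← intervalIntegral.integral_const_mul]
  apply intervalIntegral.integral_congr
  intro u _
  simp only
  have h2 : (2 * u / β ^ 2) ^ k = 2 ^ k * u ^ k / (β ^ 2) ^ k := by
    rw [mul_div_assoc, mul_pow, div_pow]
    ring
  rw [h2, ← pow_mul]
  have h3 : β ^ (2 * k + 2) = β ^ (2*k) * β ^ 2 := by rw [pow_add]
  rw [h3]
  field_simp

lemma sqrt2pi_pos : 0 < Real.sqrt (2 * Real.pi) :=
  Real.sqrt_pos.2 (by positivity)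

lemma stdPdf_le (t : ℝ) : |stdPdf t| ≤ 1 / Real.sqrt (2 * Real.pi) := by
  unfold stdPdf
  rw [abs_div, abs_of_nonneg (Real.exp_pos _).le, abs_of_nonneg sqrt2pi_pos.le]
  gcongr
  calc Real.exp (-t ^ 2 / 2) ≤ Real.exp 0 := Real.exp_le_exp.2 (by nlinarith [sq_nonneg t])
    _ = 1 := Real.exp_zero

lemma term_eq (a : ℝ) (k : ℕ) (β x : ℝ) (hβ : β ≠ 0) :
    ∫ t in (0:ℝ)..x, stdPdf (β * t) * (a * t ^ (2 * k + 1)) =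
      (1 / Real.sqrt (2 * Real.pi)) *
        ((evenDF k * a / β ^ (2 * k + 2)) * regGammaP (k + 1) (β ^ 2 * x ^ 2 / 2)) := by
  have h1 : ∀ t : ℝ, stdPdf (β * t) * (a * t ^ (2 * k + 1)) =
      (a / Real.sqrt (2 * Real.pi)) * (Real.exp (-(β ^ 2 * t ^ 2) / 2) * t ^ (2 * k + 1)) := by
    intro t
    unfold stdPdf
    rw [mul_pow]
    ring
  rw [intervalIntegral.integral_congr (fun t _ => h1 t), intervalIntegral.integral_const_mul,
    subst_lemma k β x hβ]
  have hg : regGammaP (k + 1) (β ^ 2 * x ^ 2 / 2) =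
      (∫ u in (0:ℝ)..(β ^ 2 * x ^ 2 / 2), u ^ k * Real.exp (-u)) / (k.factorial : ℝ) := by
    unfold regGammaP
    rw [Real.Gamma_nat_eq_factorial]
    congr 1
    apply intervalIntegral.integral_congr
    intro u _
    have : ((k:ℝ) + 1 - 1) = (k : ℝ) := by ring
    rw [this]
    simp only
    rw [Real.rpow_natCast]
  rw [hg]
  unfold evenDF
  have hk : (k.factorial : ℝ) ≠ 0 := Nat.cast_ne_zero.2 k.factorial_ne_zero
  field_simp

set_option maxHeartbeats 1000000 in
theorem integral_pdf_mul_odd_series (c : ℕ → ℝ) (β x : ℝ) (hβ : β ≠ 0) (hx : 0 ≤ x)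
    (habs : ∀ y : ℝ, Summable fun k : ℕ => |c k * y ^ (2 * k + 1)|) :
    ∫ t in (0:ℝ)..x, stdPdf (β * t) * ∑' k : ℕ, c k * t ^ (2 * k + 1) =
      (1 / Real.sqrt (2 * Real.pi)) * ∑' k : ℕ,
        (evenDF k * c k / β ^ (2 * k + 2)) *
          regGammaP (k + 1) (β ^ 2 * x ^ 2 / 2) := by
  have hsum : HasSum (fun k : ℕ => ∫ t in (0:ℝ)..x, stdPdf (β * t) * (c k * t ^ (2 * k + 1)))
      (∫ t in (0:ℝ)..x, stdPdf (β * t) * ∑' k : ℕ, c k * t ^ (2 * k + 1)) := by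
    apply intervalIntegral.hasSum_integral_of_dominated_convergence
      (bound := fun k _ => (1 / Real.sqrt (2 * Real.pi)) * |c k * x ^ (2 * k + 1)|)
    · intro k
      apply Continuous.aestronglyMeasurable
      unfold stdPdf
      fun_prop
    · intro k
      filter_upwards with t ht
      rw [Set.uIoc_of_le hx] at ht
      have ht0 : 0 < t := ht.1
      have htx : t ≤ x := ht.2
      rw [Real.norm_eq_abs, abs_mul]
      have hpw : |c k * t ^ (2 * k + 1)| ≤ |c k * x ^ (2 * k + 1)| := by
        rw [abs_mul, abs_mul]
        refine mul_le_mul_of_nonneg_left ?_ (abs_nonneg _)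
        rw [abs_of_nonneg (by positivity : (0:ℝ) ≤ t ^ (2*k+1)),
          abs_of_nonneg (by positivity : (0:ℝ) ≤ x ^ (2*k+1))]
        exact pow_le_pow_left₀ ht0.le htx _
      exact mul_le_mul (stdPdf_le _) hpw (abs_nonneg _) (by positivity)
    · filter_upwards with t _
      exact (habs x).mul_left _
    · exact intervalIntegrable_const
    · filter_upwards with t _
      exact ((habs t).of_abs.hasSum).mul_left _
  rw [← hsum.tsum_eq]
  rw [tsum_congr (fun k => term_eq (c k) k β x hβ)]
  rw [tsum_mul_left]
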